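/- Let G be a finite weighted graph with symmetric nonnegative conductances and connected skeleton, and let λ₁^{IP}(G) be the spectral gap of the interchange process generator L^{IP} f(η) = ∑_{xy} c_{xy}(f(η τ_{xy}) - f(η)) on permutations. Let H = {f : X_n → ℝ : ν[f | ξ_i] = 0 for all i}. Then H is an invariant subspace of L^{IP}, and every eigenvalue of -L^{IP} that is not an eigenvalue of -L^{RW} has all its eigenfunctions in H; consequently λ₁^{IP}(G) = min(λ₁^{RW}(G), μ₁^{IP}(G)), where μ₁^{IP}(G) is the smallest eigenvalue of -L^{IP} restricted to H. -/

import Mathlib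

open Finset Equiv

variable {n : ℕ}

/-- Interchange process generator: `L^{IP} f(η) = ∑_{x<y} c_{xy}(f(η τ_{xy}) - f(η))`. -/
def ipGen (c : Fin n → Fin n → ℝ) (f : Perm (Fin n) → ℝ) (η : Perm (Fin n)) : ℝ :=
  ∑ x : Fin n, ∑ y ∈ univ.filter (fun y => x < y),
    c x y * (f (η * Equiv.swap x y) - f η)

/-- Random walk generator: `L^{RW} g(x) = ∑_{y≠x} c_{xy}(g(y) - g(x))`. -/
def rwGen (c : Fin n → Fin n → ℝ) (g : Fin n → ℝ) (x : Fin n) : ℝ :=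
  ∑ y ∈ univ.erase x, c x y * (g y - g x)

/-- `f ∈ H` iff `ν[f | ξ_i] = 0` for every label `i`, i.e. the sum of `f` over every
level set `{η : ξ_i(η) = x}` (with `ξ_i(η) = η⁻¹ i`) vanishes. -/
def memH (f : Perm (Fin n) → ℝ) : Prop :=
  ∀ i x : Fin n, ∑ η ∈ univ.filter (fun η : Perm (Fin n) => η⁻¹ i = x), f η = 0

/-- Reindex a level-set sum under right multiplication. -/
lemma shift_sum (f : Perm (Fin n) → ℝ) (i x₀ : Fin n) (s : Perm (Fin n)) :
    ∑ η ∈ univ.filter (fun η : Perm (Fin n) => η⁻¹ i = x₀), f (η * s)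
      = ∑ η ∈ univ.filter (fun η : Perm (Fin n) => η⁻¹ i = s⁻¹ x₀), f η := by
  refine Finset.sum_equiv (Equiv.mulRight s) (fun η => ?_) (fun η _ => rfl)
  simp only [Finset.mem_filter, Finset.mem_univ, true_and, Equiv.mulRight,
    Equiv.coe_fn_mk, mul_inv_rev, Equiv.Perm.mul_apply]
  constructor
  · rintro rfl; rfl
  · intro h; have := congrArg s h; simpa using this

/-- Key combinatorial identity. -/
lemma sumC (c : Fin n → Fin n → ℝ) (hsymm : ∀ x y, c x y = c y x)
    (F : Fin n → ℝ) (x₀ : Fin n) :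
    ∑ x : Fin n, ∑ y ∈ univ.filter (fun y => x < y),
        c x y * (F (Equiv.swap x y x₀) - F x₀)
      = rwGen c F x₀ := by
  set t : Fin n → Fin n → ℝ := fun x y => c x y * (F (Equiv.swap x y x₀) - F x₀) with ht
  have hzero : ∀ x y, x₀ ≠ x → x₀ ≠ y → t x y = 0 := by
    intro x y hx hy
    simp [ht, Equiv.swap_apply_of_ne_of_ne hx hy]
  have hsymt : ∀ x y, t x y = t y x := by
    intro x y; simp only [ht, Equiv.swap_comm, hsymm x y]
  have htval : ∀ y, t x₀ y = c x₀ y * (F y - F x₀) := by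
    intro y; simp [ht]
  -- split the outer sum at x₀
  rw [← Finset.sum_erase_add _ _ (Finset.mem_univ x₀)]
  have h1 : ∑ x ∈ univ.erase x₀, ∑ y ∈ univ.filter (fun y => x < y), t x y
      = ∑ x ∈ univ.filter (fun x => x < x₀), t x₀ x := by
    have step : ∀ x ∈ univ.erase x₀, ∑ y ∈ univ.filter (fun y => x < y), t x y
        = if x < x₀ then t x₀ x else 0 := by
      intro x hx
      have hx' : x ≠ x₀ := (Finset.mem_erase.mp hx).1
      have : ∀ y ∈ univ.filter (fun y => x < y), t x y = if y = x₀ then t x₀ x else 0 := by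
        intro y hy
        by_cases h : y = x₀
        · subst h; simp [hsymt]
        · simp [h, hzero x y (Ne.symm hx') (Ne.symm h)]
      rw [Finset.sum_congr rfl this, Finset.sum_ite_eq' _ x₀ (fun _ => t x₀ x)]
      simp
    rw [Finset.sum_congr rfl step]
    rw [Finset.sum_ite, Finset.sum_const_zero, add_zero]
    congr 1
    ext x
    simp only [Finset.mem_filter, Finset.mem_erase, Finset.mem_univ, true_and, and_true]
    exact ⟨fun ⟨_, h⟩ => h, fun h => ⟨ne_of_lt h, h⟩⟩
  rw [h1]
  -- now combine with the x = x₀ part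
  have h2 : rwGen c F x₀ = ∑ x ∈ univ.filter (fun x => x < x₀), t x₀ x
      + ∑ y ∈ univ.filter (fun y => x₀ < y), t x₀ y := by
    unfold rwGen
    have : ∀ y ∈ univ.erase x₀, c x₀ y * (F y - F x₀) = t x₀ y := fun y _ => (htval y).symm
    rw [Finset.sum_congr rfl this, ← Finset.sum_filter_add_sum_filter_not (univ.erase x₀)
      (fun y => y < x₀) (t x₀)]
    congr 1
    · congr 1; ext y
      simp only [Finset.mem_filter, Finset.mem_erase, Finset.mem_univ, true_and, and_true]
      exact ⟨fun ⟨_, h⟩ => h, fun h => ⟨ne_of_lt h, h⟩⟩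
    · congr 1; ext y
      simp only [Finset.mem_filter, Finset.mem_erase, Finset.mem_univ, true_and, and_true]
      exact ⟨fun ⟨hne, h⟩ => lt_of_le_of_ne (not_lt.mp h) (Ne.symm hne),
             fun h => ⟨(ne_of_lt h).symm, not_lt.mpr (le_of_lt h)⟩⟩
  rw [h2]

/-- Conditioning the interchange generator on a level set gives the RW generator. -/
lemma level_ipGen (c : Fin n → Fin n → ℝ) (hsymm : ∀ x y, c x y = c y x)
    (f : Perm (Fin n) → ℝ) (i x₀ : Fin n) :
    ∑ η ∈ univ.filter (fun η : Perm (Fin n) => η⁻¹ i = x₀), ipGen c f η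
      = rwGen c (fun z => ∑ η ∈ univ.filter (fun η : Perm (Fin n) => η⁻¹ i = z), f η) x₀ := by
  set F : Fin n → ℝ := fun z => ∑ η ∈ univ.filter (fun η : Perm (Fin n) => η⁻¹ i = z), f η
    with hF
  unfold ipGen
  rw [Finset.sum_comm]
  have main : ∀ x : Fin n,
      ∑ η ∈ univ.filter (fun η : Perm (Fin n) => η⁻¹ i = x₀),
        ∑ y ∈ univ.filter (fun y => x < y), c x y * (f (η * Equiv.swap x y) - f η)
      = ∑ y ∈ univ.filter (fun y => x < y),
          c x y * (F (Equiv.swap x y x₀) - F x₀) := by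
    intro x
    rw [Finset.sum_comm]
    refine Finset.sum_congr rfl fun y _ => ?_
    rw [← Finset.mul_sum, Finset.sum_sub_distrib]
    have h := shift_sum f i x₀ (Equiv.swap x y)
    rw [Equiv.swap_inv] at h
    rw [h]
  rw [Finset.sum_congr rfl (fun x _ => main x)]
  exact sumC c hsymm F x₀

/-- Lift of a RW function to the permutation space. -/
lemma ipGen_lift (c : Fin n → Fin n → ℝ) (hsymm : ∀ x y, c x y = c y x)
    (g : Fin n → ℝ) (i : Fin n) (η : Perm (Fin n)) :
    ipGen c (fun σ => g (σ⁻¹ i)) η = rwGen c g (η⁻¹ i) := by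
  unfold ipGen
  have key : ∀ x y : Fin n, (η * Equiv.swap x y)⁻¹ i = Equiv.swap x y (η⁻¹ i) := by
    intro x y
    simp [mul_inv_rev, Equiv.swap_inv]
  calc ∑ x : Fin n, ∑ y ∈ univ.filter (fun y => x < y),
        c x y * (g ((η * Equiv.swap x y)⁻¹ i) - g (η⁻¹ i))
      = ∑ x : Fin n, ∑ y ∈ univ.filter (fun y => x < y),
        c x y * (g (Equiv.swap x y (η⁻¹ i)) - g (η⁻¹ i)) := by
        refine Finset.sum_congr rfl fun x _ => Finset.sum_congr rfl fun y _ => ?_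
        rw [key]
    _ = rwGen c g (η⁻¹ i) := sumC c hsymm g (η⁻¹ i)

/-- Dirichlet identity per pair. -/
lemma pair_sq (f : Perm (Fin n) → ℝ) (s : Perm (Fin n)) :
    ∑ η : Perm (Fin n), (f (η * s) - f η)^2
      = -2 * ∑ η : Perm (Fin n), f η * (f (η * s) - f η) := by
  have h : ∑ η : Perm (Fin n), (f (η * s))^2 = ∑ η : Perm (Fin n), (f η)^2 :=
    Fintype.sum_equiv (Equiv.mulRight s) _ _ (fun η => rfl)
  have e1 : ∑ η : Perm (Fin n), (f (η * s) - f η)^2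
      = ∑ η : Perm (Fin n), ((f (η * s))^2 - 2*(f η * (f (η * s) - f η)) - (f η)^2) :=
    Finset.sum_congr rfl fun η _ => by ring
  rw [e1, Finset.sum_sub_distrib, Finset.sum_sub_distrib, h, ← Finset.mul_sum]
  ring

/-- A function in the kernel of the interchange generator is constant
(given connectedness and nonnegativity). -/
lemma const_of_kernel (c : Fin n → Fin n → ℝ) (hsymm : ∀ x y, c x y = c y x)
    (hnonneg : ∀ x y, 0 ≤ c x y)
    (hconn : (SimpleGraph.fromRel (fun x y : Fin n => 0 < c x y)).Connected)
    (f : Perm (Fin n) → ℝ) (hker : ∀ η, ipGen c f η = 0) :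
    ∀ η, f η = f 1 := by
  -- energy is zero
  have hE : ∑ x : Fin n, ∑ y ∈ univ.filter (fun y => x < y),
      ∑ η : Perm (Fin n), c x y * (f (η * Equiv.swap x y) - f η)^2 = 0 := by
    have step : ∀ x : Fin n, ∀ y ∈ univ.filter (fun y : Fin n => x < y),
        ∑ η : Perm (Fin n), c x y * (f (η * Equiv.swap x y) - f η)^2
          = -2 * ∑ η : Perm (Fin n), c x y * (f η * (f (η * Equiv.swap x y) - f η)) := by
      intro x y _
      rw [← Finset.mul_sum, ← Finset.mul_sum, pair_sq f (Equiv.swap x y)]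
      ring
    rw [Finset.sum_congr rfl (fun x _ => Finset.sum_congr rfl (step x))]
    have swapped : ∑ x : Fin n, ∑ y ∈ univ.filter (fun y : Fin n => x < y),
        ∑ η : Perm (Fin n), c x y * (f η * (f (η * Equiv.swap x y) - f η)) = 0 := by
      have : ∀ x : Fin n, ∑ y ∈ univ.filter (fun y : Fin n => x < y),
          ∑ η : Perm (Fin n), c x y * (f η * (f (η * Equiv.swap x y) - f η))
          = ∑ η : Perm (Fin n), ∑ y ∈ univ.filter (fun y : Fin n => x < y),
            c x y * (f η * (f (η * Equiv.swap x y) - f η)) :=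
        fun x => Finset.sum_comm
      rw [Finset.sum_congr rfl (fun x _ => this x), Finset.sum_comm]
      have : ∀ η : Perm (Fin n), ∑ x : Fin n, ∑ y ∈ univ.filter (fun y : Fin n => x < y),
          c x y * (f η * (f (η * Equiv.swap x y) - f η)) = f η * ipGen c f η := by
        intro η
        unfold ipGen
        rw [Finset.mul_sum]
        refine Finset.sum_congr rfl fun x _ => ?_
        rw [Finset.mul_sum]
        exact Finset.sum_congr rfl fun y _ => by ring
      rw [Finset.sum_congr rfl (fun η _ => this η)]
      exact Finset.sum_eq_zero fun η _ => by rw [hker η, mul_zero]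
    calc ∑ x : Fin n, ∑ y ∈ univ.filter (fun y : Fin n => x < y),
        (-2 * ∑ η : Perm (Fin n), c x y * (f η * (f (η * Equiv.swap x y) - f η)))
        = -2 * ∑ x : Fin n, ∑ y ∈ univ.filter (fun y : Fin n => x < y),
          ∑ η : Perm (Fin n), c x y * (f η * (f (η * Equiv.swap x y) - f η)) := by
          rw [Finset.mul_sum]
          exact Finset.sum_congr rfl fun x _ => by rw [Finset.mul_sum]
      _ = 0 := by rw [swapped, mul_zero]
  -- each term vanishes
  have hterm : ∀ x y : Fin n, x < y → ∀ η : Perm (Fin n),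
      c x y * (f (η * Equiv.swap x y) - f η)^2 = 0 := by
    intro x y hxy η
    have h1 : ∀ x : Fin n, ∀ y ∈ univ.filter (fun y : Fin n => x < y),
        0 ≤ ∑ η : Perm (Fin n), c x y * (f (η * Equiv.swap x y) - f η)^2 :=
      fun x y _ => Finset.sum_nonneg fun η _ =>
        mul_nonneg (hnonneg x y) (sq_nonneg _)
    have h2 := (Finset.sum_eq_zero_iff_of_nonneg
      (fun x _ => Finset.sum_nonneg (h1 x))).mp hE x (Finset.mem_univ x)
    have h3 := (Finset.sum_eq_zero_iff_of_nonneg (h1 x)).mp h2 y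
      (by simp [hxy])
    exact (Finset.sum_eq_zero_iff_of_nonneg
      (fun η _ => mul_nonneg (hnonneg x y) (sq_nonneg _))).mp h3 η (Finset.mem_univ η)
  -- invariance along edges
  have hadj : ∀ a b : Fin n, (SimpleGraph.fromRel (fun x y : Fin n => 0 < c x y)).Adj a b →
      ∀ η, f (η * Equiv.swap a b) = f η := by
    intro a b hab η
    rw [SimpleGraph.fromRel_adj] at hab
    obtain ⟨hne, hc⟩ := hab
    have hcab : 0 < c a b := by
      rcases hc with h | h
      · exact h
      · rw [hsymm]; exact h
    rcases lt_or_gt_of_ne hne with h | h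
    · have := hterm a b h η
      have hsq : (f (η * Equiv.swap a b) - f η)^2 = 0 := by
        rcases mul_eq_zero.mp this with h' | h'
        · exact absurd h' (ne_of_gt hcab)
        · exact h'
      have := pow_eq_zero_iff (n := 2) (by norm_num) |>.mp hsq
      linarith [this]
    · have := hterm b a h η
      have hcba : 0 < c b a := by rw [← hsymm]; exact hcab
      have hsq : (f (η * Equiv.swap b a) - f η)^2 = 0 := by
        rcases mul_eq_zero.mp this with h' | h'
        · exact absurd h' (ne_of_gt hcba)
        · exact h'
      have h0 := pow_eq_zero_iff (n := 2) (by norm_num) |>.mp hsq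
      rw [Equiv.swap_comm] at h0
      linarith [h0]
  -- invariance along walks: all swaps
  have hswap : ∀ a b : Fin n, ∀ η, f (η * Equiv.swap a b) = f η := by
    intro a b
    obtain ⟨w⟩ := hconn.preconnected a b
    induction w with
    | nil => intro η; simp; rfl
    | @cons a c b h w ih =>
      intro η
      by_cases hcb : c = b
      · subst hcb; exact hadj _ _ h η
      by_cases hab : a = b
      · subst hab; simp; rfl
      have hkey : Equiv.swap a b = Equiv.swap a c * Equiv.swap c b * Equiv.swap a c := by
        have h2 := Equiv.swap_apply_apply (Equiv.swap a c) c b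
        rw [Equiv.swap_apply_right, Equiv.swap_inv,
          Equiv.swap_apply_of_ne_of_ne (Ne.symm hab) (Ne.symm hcb)] at h2
        exact h2
      rw [hkey, ← mul_assoc, ← mul_assoc]
      exact (hadj a c h _).trans ((ih _).trans (hadj a c h η))
  intro η
  refine Equiv.Perm.swap_induction_on' η rfl ?_
  intro σ x y _ hP
  exact (hswap x y σ).trans hP

/-- `H` is invariant under `L^{IP}`; every eigenvalue of `-L^{IP}` that is not an
eigenvalue of `-L^{RW}` has all its eigenfunctions in `H`; and consequently
`λ₁^{IP} = min(λ₁^{RW}, μ₁^{IP})`, where `λ₁^{IP}`, `λ₁^{RW}` are the smallest nonzero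
eigenvalues of `-L^{IP}`, `-L^{RW}` and `μ₁^{IP}` is the smallest eigenvalue of
`-L^{IP}` restricted to `H`. -/
theorem gap_decomposition [NeZero n] (c : Fin n → Fin n → ℝ)
    (hsymm : ∀ x y, c x y = c y x) (hnonneg : ∀ x y, 0 ≤ c x y)
    (hconn : (SimpleGraph.fromRel (fun x y : Fin n => 0 < c x y)).Connected) :
    (∀ f : Perm (Fin n) → ℝ, memH f → memH (ipGen c f)) ∧
    (∀ (lam : ℝ) (f : Perm (Fin n) → ℝ), f ≠ 0 →
      (∀ η, -(ipGen c f η) = lam * f η) →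
      ¬(∃ g : Fin n → ℝ, g ≠ 0 ∧ ∀ x, -(rwGen c g x) = lam * g x) →
      memH f) ∧
    (∀ lamIP lamRW mu : ℝ,
      (∃ f : Perm (Fin n) → ℝ, f ≠ 0 ∧ ∀ η, -(ipGen c f η) = lamIP * f η) →
      lamIP ≠ 0 →
      (∀ lam : ℝ, lam ≠ 0 →
        (∃ f : Perm (Fin n) → ℝ, f ≠ 0 ∧ ∀ η, -(ipGen c f η) = lam * f η) →
        lamIP ≤ lam) →
      (∃ g : Fin n → ℝ, g ≠ 0 ∧ ∀ x, -(rwGen c g x) = lamRW * g x) →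
      lamRW ≠ 0 →
      (∀ lam : ℝ, lam ≠ 0 →
        (∃ g : Fin n → ℝ, g ≠ 0 ∧ ∀ x, -(rwGen c g x) = lam * g x) →
        lamRW ≤ lam) →
      (∃ f : Perm (Fin n) → ℝ, f ≠ 0 ∧ memH f ∧ ∀ η, -(ipGen c f η) = mu * f η) →
      (∀ lam : ℝ,
        (∃ f : Perm (Fin n) → ℝ, f ≠ 0 ∧ memH f ∧ ∀ η, -(ipGen c f η) = lam * f η) →
        mu ≤ lam) →
      lamIP = min lamRW mu) := by
  have part2 : ∀ (lam : ℝ) (f : Perm (Fin n) → ℝ), f ≠ 0 →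
      (∀ η, -(ipGen c f η) = lam * f η) →
      ¬(∃ g : Fin n → ℝ, g ≠ 0 ∧ ∀ x, -(rwGen c g x) = lam * g x) →
      memH f := by
    intro lam f _ heig hnot i x
    by_cases hF : (fun z => ∑ η ∈ univ.filter (fun η : Perm (Fin n) => η⁻¹ i = z), f η)
        = 0
    · exact congrFun hF x
    · exfalso
      apply hnot
      refine ⟨_, hF, fun x₀ => ?_⟩
      rw [← level_ipGen c hsymm f i x₀]
      rw [Finset.mul_sum, ← Finset.sum_neg_distrib]
      exact Finset.sum_congr rfl fun η _ => heig η
  refine ⟨?_, part2, ?_⟩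
  · -- H is invariant
    intro f hf i x
    rw [level_ipGen c hsymm f i x]
    unfold rwGen
    exact Finset.sum_eq_zero fun y _ => by simp only []; rw [hf i y, hf i x]; ring
  · -- the gap identity
    intro lamIP lamRW mu hIPex hIP0 hIPmin hRWex hRW0 hRWmin hmuex hmumin
    have hle1 : lamIP ≤ lamRW := by
      obtain ⟨g, hg, heig⟩ := hRWex
      refine hIPmin lamRW hRW0 ⟨fun σ => g (σ⁻¹ (0 : Fin n)), ?_, fun η => ?_⟩
      · intro h0
        apply hg
        funext z
        have h1 : (fun σ : Perm (Fin n) => g (σ⁻¹ (0 : Fin n)))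
            (Equiv.swap (0 : Fin n) z) = 0 := by rw [h0]; rfl
        simpa [Equiv.swap_inv, Equiv.swap_apply_left] using h1
      · rw [ipGen_lift c hsymm g 0 η, heig (η⁻¹ 0)]
    have hmu0 : mu ≠ 0 := by
      intro h0
      obtain ⟨f, hfne, hfH, heig⟩ := hmuex
      have hker : ∀ η, ipGen c f η = 0 := fun η => by
        have h := heig η; rw [h0, zero_mul] at h; linarith
      have hconst := const_of_kernel c hsymm hnonneg hconn f hker
      have hsum := hfH 0 0
      have hmem : (1 : Perm (Fin n)) ∈
          univ.filter (fun η : Perm (Fin n) => η⁻¹ (0 : Fin n) = 0) := by simp; rfl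
      rw [Finset.sum_congr rfl (fun η _ => hconst η), Finset.sum_const] at hsum
      have hcard : 0 < (univ.filter
          (fun η : Perm (Fin n) => η⁻¹ (0 : Fin n) = 0)).card :=
        Finset.card_pos.mpr ⟨1, hmem⟩
      have hf1 : f 1 = 0 := by
        rw [nsmul_eq_mul] at hsum
        rcases mul_eq_zero.mp hsum with h | h
        · exact absurd h (by positivity)
        · exact h
      exact hfne (funext fun η => by rw [hconst η, hf1]; rfl)
    have hle2 : lamIP ≤ mu :=
      hIPmin mu hmu0 (hmuex.imp fun f h => ⟨h.1, h.2.2⟩)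
    have hge : min lamRW mu ≤ lamIP := by
      obtain ⟨f, hfne, heig⟩ := hIPex
      by_cases hrw : ∃ g : Fin n → ℝ, g ≠ 0 ∧ ∀ x, -(rwGen c g x) = lamIP * g x
      · exact le_trans (min_le_left _ _) (hRWmin lamIP hIP0 hrw)
      · exact le_trans (min_le_right _ _)
          (hmumin lamIP ⟨f, hfne, part2 lamIP f hfne heig hrw, heig⟩)
    exact le_antisymm (le_min hle1 hle2) hge
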